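/- Let (R, m) be an F-finite regular local ring of characteristic p > 0 with an adapted p-basis (x_1, …, x_r, y_1, …, y_s) (the x_i form a regular system of parameters and the residues of the y_j form a p-basis of R/m), let q = p^e, and let f ∈ R have q-expansion f = Σ_{(α,β) ∈ A_q} c_{α,β}^q x^α y^β with A_q = {(α,β) : 0 ≤ α_i, β_j < q}. Then for every n ≥ 0: f ∈ m^n if and only if c_{α,β}^q x^α y^β ∈ m^n for all (α,β) ∈ A_q. -/

import Mathlib

namespace QExpAux

variable {R : Type*} [CommRing R]

/-- The monomial `x^α * y^β`. -/
def qmono {q r s : ℕ} (x : Fin r → R) (y : Fin s → R)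
    (αβ : (Fin r → Fin q) × (Fin s → Fin q)) : R :=
  (∏ i, x i ^ (αβ.1 i : ℕ)) * ∏ j, y j ^ (αβ.2 j : ℕ)

/-- A term `u^q * x^α * y^β` of a `q`-expansion, given as a triple. -/
def qterm (q : ℕ) {r s : ℕ} (x : Fin r → R) (y : Fin s → R)
    (t : R × ((Fin r → Fin q) × (Fin s → Fin q))) : R :=
  t.1 ^ q * qmono x y t.2

lemma prod_pow_erase {r : ℕ} (x : Fin r → R) (α : Fin r → ℕ) (i : Fin r) :
    ∏ k, x k ^ α k = x i ^ α i * ∏ k ∈ Finset.univ.erase i, x k ^ α k :=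
  (Finset.mul_prod_erase _ _ (Finset.mem_univ i)).symm

/-- Shifting a term by multiplication with `x i`, wrapping exponent `q` into the
coefficient. -/
lemma qterm_shift {q r s : ℕ} (hq0 : 0 < q) (x : Fin r → R) (y : Fin s → R) (i : Fin r)
    (t : R × ((Fin r → Fin q) × (Fin s → Fin q))) :
    ∃ t', qterm q x y t' = qterm q x y t * x i := by
  obtain ⟨u, α, β⟩ := t
  by_cases h : (α i : ℕ) + 1 < q
  · refine ⟨(u, Function.update α i ⟨(α i : ℕ) + 1, h⟩, β), ?_⟩
    simp only [qterm, qmono]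
    rw [prod_pow_erase x (fun k => ((Function.update α i ⟨(α i : ℕ) + 1, h⟩) k : ℕ)) i,
      prod_pow_erase x (fun k => ((α k : ℕ))) i]
    have h2 : ∀ k ∈ Finset.univ.erase i,
        x k ^ ((Function.update α i ⟨(α i : ℕ) + 1, h⟩) k : ℕ) = x k ^ (α k : ℕ) := by
      intro k hk
      rw [Function.update_of_ne (Finset.ne_of_mem_erase hk)]
    rw [Finset.prod_congr rfl h2, Function.update_self]
    ring
  · have hlt : (α i : ℕ) < q := (α i).isLt
    have hEq : (α i : ℕ) + 1 = q := by omega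
    refine ⟨(u * x i, Function.update α i ⟨0, hq0⟩, β), ?_⟩
    simp only [qterm, qmono]
    rw [prod_pow_erase x (fun k => ((Function.update α i ⟨0, hq0⟩) k : ℕ)) i,
      prod_pow_erase x (fun k => ((α k : ℕ))) i]
    have h2 : ∀ k ∈ Finset.univ.erase i,
        x k ^ ((Function.update α i ⟨0, hq0⟩) k : ℕ) = x k ^ (α k : ℕ) := by
      intro k hk
      rw [Function.update_of_ne (Finset.ne_of_mem_erase hk)]
    rw [Finset.prod_congr rfl h2, Function.update_self]
    have : x i ^ (α i : ℕ) * x i = x i ^ q := by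
      rw [← pow_succ, hEq]
    simp only [Fin.val_mk, pow_zero, one_mul, mul_pow]
    calc u ^ q * x i ^ q * ((∏ k ∈ Finset.univ.erase i, x k ^ (α k : ℕ)) * ∏ j, y j ^ (β j : ℕ))
        = u ^ q * (x i ^ (α i : ℕ) * x i) *
            ((∏ k ∈ Finset.univ.erase i, x k ^ (α k : ℕ)) * ∏ j, y j ^ (β j : ℕ)) := by rw [this]
      _ = u ^ q * (x i ^ (α i : ℕ) * (∏ k ∈ Finset.univ.erase i, x k ^ (α k : ℕ)) *
            ∏ j, y j ^ (β j : ℕ)) * x i := by ring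

/-- Every element of `M ^ n` has a `q`-expansion (as a list of terms) all of whose
terms lie in `M ^ n`. -/
lemma exists_good_list {q r s : ℕ} (hq0 : 0 < q) (x : Fin r → R) (y : Fin s → R)
    (M : Ideal R) (hx : Ideal.span (Set.range x) = M)
    (hspan : ∀ g : R, ∃ c : (Fin r → Fin q) × (Fin s → Fin q) → R,
      g = ∑ αβ : (Fin r → Fin q) × (Fin s → Fin q), (c αβ) ^ q * qmono x y αβ) :
    ∀ n (g : R), g ∈ M ^ n →
      ∃ L : List (R × ((Fin r → Fin q) × (Fin s → Fin q))),
        g = (L.map (qterm q x y)).sum ∧ ∀ t ∈ L, qterm q x y t ∈ M ^ n := by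
  intro n
  induction n with
  | zero =>
    intro g _
    obtain ⟨c, hc⟩ := hspan g
    refine ⟨Finset.univ.toList.map (fun αβ => (c αβ, αβ)), ?_, ?_⟩
    · rw [List.map_map, Finset.sum_map_toList]
      exact hc
    · intro t _
      simp [pow_zero, Ideal.one_eq_top]
  | succ n ih =>
    intro g hg
    rw [pow_succ] at hg
    refine Submodule.mul_induction_on hg ?_ ?_
    · -- a ∈ M ^ n, b ∈ M
      intro a ha b hb
      rw [← hx] at hb
      have hb' : b ∈ Submodule.span R (Set.range x) := hb
      obtain ⟨tc, htc⟩ := (Submodule.mem_span_range_iff_exists_fun R).mp hb'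
      have : a * b = ∑ i, (tc i * a) * x i := by
        rw [← htc, Finset.mul_sum]
        exact Finset.sum_congr rfl fun i _ => by rw [smul_eq_mul]; ring
      rw [this]
      refine Finset.sum_induction (fun i => (tc i * a) * x i)
        (fun g => ∃ L : List (R × ((Fin r → Fin q) × (Fin s → Fin q))),
          g = (L.map (qterm q x y)).sum ∧ ∀ t ∈ L, qterm q x y t ∈ M ^ (n + 1)) ?_ ?_ ?_
      · rintro u v ⟨L₁, h₁, h₁'⟩ ⟨L₂, h₂, h₂'⟩
        refine ⟨L₁ ++ L₂, ?_, ?_⟩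
        · rw [List.map_append, List.sum_append, h₁, h₂]
        · intro t ht
          rcases List.mem_append.mp ht with h | h
          · exact h₁' t h
          · exact h₂' t h
      · exact ⟨[], by simp, by simp⟩
      · intro i _
        obtain ⟨L, hL, hL'⟩ := ih (tc i * a) (Ideal.mul_mem_left _ _ ha)
        refine ⟨L.map (fun t => Classical.choose (qterm_shift hq0 x y i t)), ?_, ?_⟩
        · rw [List.map_map]
          have : (qterm q x y) ∘ (fun t => Classical.choose (qterm_shift hq0 x y i t)) =
              fun t => qterm q x y t * x i := by
            funext t
            exact Classical.choose_spec (qterm_shift hq0 x y i t)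
          rw [this, List.sum_map_mul_right, ← hL]
        · intro t' ht'
          obtain ⟨t, ht, rfl⟩ := List.mem_map.mp ht'
          rw [Classical.choose_spec (qterm_shift hq0 x y i t), pow_succ]
          exact Ideal.mul_mem_mul (hL' t ht) (hx ▸ Ideal.subset_span ⟨i, rfl⟩)
    · rintro u v ⟨L₁, h₁, h₁'⟩ ⟨L₂, h₂, h₂'⟩
      refine ⟨L₁ ++ L₂, ?_, ?_⟩
      · rw [List.map_append, List.sum_append, h₁, h₂]
      · intro t ht
        rcases List.mem_append.mp ht with h | h
        · exact h₁' t h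
        · exact h₂' t h

/-- If `g` has a `q`-expansion as a list of terms all lying in an ideal `N`, then
by uniqueness all terms of its canonical `q`-expansion lie in `N`. -/
lemma coeff_terms_mem (p : ℕ) [Fact p.Prime] [CharP R p] (e q : ℕ) (hq : q = p ^ e)
    {r s : ℕ} (x : Fin r → R) (y : Fin s → R) (N : Ideal R)
    (hind : ∀ a : (Fin r → Fin q) × (Fin s → Fin q) → R,
      (∀ αβ, ∃ u : R, a αβ = u ^ q) →
      (∑ αβ : (Fin r → Fin q) × (Fin s → Fin q), a αβ * qmono x y αβ) = 0 →
      ∀ αβ, a αβ = 0) :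
    ∀ (L : List (R × ((Fin r → Fin q) × (Fin s → Fin q))))
      (c : (Fin r → Fin q) × (Fin s → Fin q) → R),
      (∀ t ∈ L, qterm q x y t ∈ N) →
      (∑ αβ : (Fin r → Fin q) × (Fin s → Fin q), (c αβ) ^ q * qmono x y αβ) =
        (L.map (qterm q x y)).sum →
      ∀ αβ, (c αβ) ^ q * qmono x y αβ ∈ N := by
  intro L
  induction L with
  | nil =>
    intro c _ hsum αβ
    have := hind (fun αβ => c αβ ^ q) (fun αβ => ⟨c αβ, rfl⟩) (by simpa using hsum) αβ
    rw [this, zero_mul]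
    exact zero_mem N
  | cons t L ih =>
    intro c hmem hsum αβ
    set c' : (Fin r → Fin q) × (Fin s → Fin q) → R :=
      fun αβ => c αβ - if αβ = t.2 then t.1 else 0 with hc'
    have hq0 : q ≠ 0 := by
      rw [hq]; exact pow_ne_zero e (Nat.Prime.ne_zero Fact.out)
    have hfrob : ∀ u v : R, (u - v) ^ q = u ^ q - v ^ q := by
      intro u v; rw [hq]; exact sub_pow_char_pow u v e
    have hpow : ∀ γ, c' γ ^ q = c γ ^ q - (if γ = t.2 then t.1 ^ q else 0) := by
      intro γ
      rw [hc']
      simp only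
      rw [hfrob]
      congr 1
      split
      · rfl
      · exact zero_pow hq0
    have hsum' : (∑ αβ : (Fin r → Fin q) × (Fin s → Fin q), (c' αβ) ^ q * qmono x y αβ) =
        (L.map (qterm q x y)).sum := by
      have : ∀ γ ∈ (Finset.univ : Finset ((Fin r → Fin q) × (Fin s → Fin q))),
          c' γ ^ q * qmono x y γ =
            c γ ^ q * qmono x y γ - (if γ = t.2 then t.1 ^ q else 0) * qmono x y γ := by
        intro γ _
        rw [hpow γ, sub_mul]
      rw [Finset.sum_congr rfl this, Finset.sum_sub_distrib, hsum]
      have : (∑ γ : (Fin r → Fin q) × (Fin s → Fin q),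
          (if γ = t.2 then t.1 ^ q else 0) * qmono x y γ) = t.1 ^ q * qmono x y t.2 := by
        rw [Finset.sum_eq_single t.2]
        · simp
        · intro γ _ hγ; simp [hγ]
        · intro h; exact absurd (Finset.mem_univ t.2) h
      rw [this, List.map_cons, List.sum_cons, qterm]
      ring
    have hmem' : ∀ u ∈ L, qterm q x y u ∈ N := fun u hu => hmem u (List.mem_cons_of_mem t hu)
    have key := ih c' hmem' hsum' αβ
    have hhead : (if αβ = t.2 then t.1 ^ q else 0) * qmono x y αβ ∈ N := by
      split
      · next h => subst h; exact hmem t List.mem_cons_self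
      · rw [zero_mul]; exact zero_mem N
    have : c αβ ^ q * qmono x y αβ =
        c' αβ ^ q * qmono x y αβ + (if αβ = t.2 then t.1 ^ q else 0) * qmono x y αβ := by
      rw [hpow αβ]; ring
    rw [this]
    exact add_mem key hhead

end QExpAux


/-- A Noetherian local ring is regular when its maximal ideal is generated by a regular
sequence. -/
def IsRegularLocal (R : Type*) [CommRing R] [IsLocalRing R] : Prop :=
  IsNoetherianRing R ∧ ∃ rs : List R,
    RingTheory.Sequence.IsRegular R rs ∧
    Ideal.span {x | x ∈ rs} = IsLocalRing.maximalIdeal R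

/-- Setting: `(R, m)` is an `F`-finite regular local ring of characteristic `p > 0`,
`q = p ^ e`, `(x 0, …, x (r-1), y 0, …, y (s-1))` is an adapted `p`-basis: the `x i`
form a regular system of parameters (they generate `m`), the monomials
`x ^ α * y ^ β` with exponents `< q` form an `R ^ q`-basis of `R`, and the residues of
the `y j` form a `p`-basis of the residue field `R / m`.  The element `f` has
`q`-expansion `f = Σ_{(α,β) ∈ A_q} (c (α,β)) ^ q * x ^ α * y ^ β`. -/
theorem mem_pow_maximalIdeal_iff_terms_of_qExpansion
    (R : Type*) [CommRing R] [IsDomain R] [IsLocalRing R] (hreg : IsRegularLocal R)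
    (p : ℕ) [Fact p.Prime] [CharP R p]
    (hF : Module.Finite (↥(frobenius R p).range) R)
    (e q : ℕ) (hq : q = p ^ e)
    (r s : ℕ) (x : Fin r → R) (y : Fin s → R)
    (hx : Ideal.span (Set.range x) = IsLocalRing.maximalIdeal R)
    (hbasis_span : ∀ g : R, ∃ c : (Fin r → Fin q) × (Fin s → Fin q) → R,
      g = ∑ αβ : (Fin r → Fin q) × (Fin s → Fin q),
        (c αβ) ^ q * ((∏ i, x i ^ (αβ.1 i : ℕ)) * ∏ j, y j ^ (αβ.2 j : ℕ)))
    (hbasis_ind : ∀ a : (Fin r → Fin q) × (Fin s → Fin q) → R,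
      (∀ αβ, ∃ u : R, a αβ = u ^ q) →
      (∑ αβ : (Fin r → Fin q) × (Fin s → Fin q),
        a αβ * ((∏ i, x i ^ (αβ.1 i : ℕ)) * ∏ j, y j ^ (αβ.2 j : ℕ))) = 0 →
      ∀ αβ, a αβ = 0)
    (hy_span : ∀ g : R, ∃ d : (Fin s → Fin p) → R,
      g - ∑ β : Fin s → Fin p, (d β) ^ p * ∏ j, y j ^ (β j : ℕ) ∈
        IsLocalRing.maximalIdeal R)
    (hy_ind : ∀ d : (Fin s → Fin p) → R,
      (∑ β : Fin s → Fin p, (d β) ^ p * ∏ j, y j ^ (β j : ℕ)) ∈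
          IsLocalRing.maximalIdeal R →
      ∀ β, d β ∈ IsLocalRing.maximalIdeal R)
    (f : R) (c : (Fin r → Fin q) × (Fin s → Fin q) → R)
    (hf : f = ∑ αβ : (Fin r → Fin q) × (Fin s → Fin q),
      (c αβ) ^ q * ((∏ i, x i ^ (αβ.1 i : ℕ)) * ∏ j, y j ^ (αβ.2 j : ℕ)))
    (n : ℕ) :
    f ∈ IsLocalRing.maximalIdeal R ^ n ↔
      ∀ αβ : (Fin r → Fin q) × (Fin s → Fin q),
        (c αβ) ^ q * ((∏ i, x i ^ (αβ.1 i : ℕ)) * ∏ j, y j ^ (αβ.2 j : ℕ)) ∈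
          IsLocalRing.maximalIdeal R ^ n := by

  constructor
  · intro h
    have hq0 : 0 < q := by
      rw [hq]; exact pow_pos (Nat.Prime.pos Fact.out) e
    obtain ⟨L, hL, hL'⟩ := QExpAux.exists_good_list hq0 x y (IsLocalRing.maximalIdeal R) hx
      (fun g => hbasis_span g) n f h
    intro αβ
    have hsum : (∑ αβ : (Fin r → Fin q) × (Fin s → Fin q),
        (c αβ) ^ q * QExpAux.qmono x y αβ) = (L.map (QExpAux.qterm q x y) ).sum := by
      rw [hf] at hL
      exact hL
    exact QExpAux.coeff_terms_mem p e q hq x y (IsLocalRing.maximalIdeal R ^ n)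
      (fun a h1 h2 => hbasis_ind a h1 h2) L c hL' hsum αβ
  · intro h
    rw [hf]
    exact Ideal.sum_mem _ fun αβ _ => h αβ
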